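/- arXiv:1804.02511 — 3 statements merged into one kernel-verified Lean document; each statement's English description precedes it below -/
import Mathlib

section
/- If K is a virtual knot diagram and K^! denotes the vertical mirror image of K (the diagram obtained by reflecting K in a plane perpendicular to the plane of the diagram and reversing the orientation of the result), then P_{K^!}(t) = -P_K(t). -/
/-!
# Virtual knots and links via signed Gauss codes

A virtual knot or link diagram, up to the virtual Reidemeister moves and the
detour move, is faithfully encoded by its signed oriented Gauss code: the
cyclic sequence, along each component, of passages through the classical
crossings, each passage recording the crossing's name, whether the strand
passes over or under, and the crossing sign.  Virtual crossings and the
detour move are invisible in this encoding, so oriented virtual isotopy is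
generated by the oriented classical Reidemeister moves together with
re-encoding moves (rotation of the base point, permutation of the components,
renaming of the crossings).
-/

open LaurentPolynomial

/-- A passage of a strand through a classical crossing of a virtual diagram. -/
structure Passage where
  id : ℕ
  isOver : Bool
  sign : ℤ
  deriving DecidableEq, Repr

instance : Inhabited Passage := ⟨⟨0, false, 0⟩⟩

/-- The affine-label increment when the strand passes through a crossing:
crossing to the left increases the label by one, crossing to the right
decreases it by one.  For a positive crossing the over-strand crosses to the
right and the under-strand to the left; for a negative crossing it is the
other way around.  Labels are unchanged at virtual crossings. -/
def Passage.inc (p : Passage) : ℤ := if p.isOver then -p.sign else p.sign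

/-- The Gauss code of one oriented circle component. -/
abbrev KCode := List Passage

/-- The list of classical crossing names appearing in a code. -/
def crossIds (a : KCode) : List ℕ := (a.map Passage.id).dedup

/-- The number of classical crossings. -/
def numCross (a : KCode) : ℕ := (crossIds a).length

/-- A valid knot code: every crossing has sign `±1` and occurs exactly once as
an over-passage and exactly once as an under-passage, with consistent sign. -/
def ValidK (a : KCode) : Prop :=
  ∀ p ∈ a, (p.sign = 1 ∨ p.sign = -1) ∧
    (a.filter (fun q => q.id == p.id && q.isOver)).length = 1 ∧
    (a.filter (fun q => q.id == p.id && !q.isOver)).length = 1 ∧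
    (∀ q ∈ a, q.id = p.id → q.sign = p.sign)

/-- The canonical affine label of the arc entering the `k`-th passage
(base label `0` on the arc entering the `0`-th passage). -/
def labelAt (a : KCode) (k : ℕ) : ℤ := ((a.take k).map Passage.inc).sum

/-- Position of the over-passage of crossing `i`. -/
def overPos (a : KCode) (i : ℕ) : ℕ := a.findIdx (fun p => p.id == i && p.isOver)

/-- Position of the under-passage of crossing `i`. -/
def underPos (a : KCode) (i : ℕ) : ℕ := a.findIdx (fun p => p.id == i && !p.isOver)

/-- The sign of crossing `i`. -/
def sgn (a : KCode) (i : ℕ) : ℤ :=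
  ((a.find? (fun p => p.id == i)).map Passage.sign).getD 0

/-- The weight `W_K(c)` of a crossing `c`: with incoming labels `a` (left) and
`b` (right) it is `W₊ = a - b - 1` if `sgn c = 1` and `W₋ = b - a + 1` if
`sgn c = -1`; equivalently it is
(label entering the over-passage) − (label entering the under-passage) − sign. -/
def wt (a : KCode) (i : ℕ) : ℤ :=
  labelAt a (overPos a i) - labelAt a (underPos a i) - sgn a i

/-- The affine index polynomial `P_K(t) = ∑_c sgn(c) (t^{W_K(c)} - 1)`. -/
noncomputable def affP (a : KCode) : LaurentPolynomial ℤ :=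
  ((crossIds a).map (fun i => (C (sgn a i)) * (T (wt a i) - 1))).sum

/-- The signed crossing count `wr_n(K) = ∑_{c : W_K(c) = n} sgn(c)`. -/
def wrn (a : KCode) (n : ℤ) : ℤ :=
  (((crossIds a).filter (fun i => wt a i == n)).map (sgn a)).sum

/-- A crossing is odd when it flanks an odd number of symbols of the Gauss
code, i.e. when the positions of its two passages differ by an even number. -/
def OddCross (a : KCode) (i : ℕ) : Bool := (overPos a i + underPos a i) % 2 == 0

/-- The odd writhe `J(K)`: the sum of the signs of the odd crossings. -/
def oddWrithe (a : KCode) : ℤ := (((crossIds a).filter (OddCross a)).map (sgn a)).sum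

/-- The reverse `K̄` of `K`: the same diagram with reversed orientation. -/
def reverseK (a : KCode) : KCode := a.reverse

/-- The (flat) mirror image `K*`: every classical crossing is switched, which
exchanges over- and under-passages and reverses all crossing signs. -/
def switchAll (a : KCode) : KCode := a.map (fun p => ⟨p.id, !p.isOver, -p.sign⟩)

/-- The vertical mirror image `K^!`: reflect the diagram in a plane
perpendicular to the plane of the diagram (which keeps the over/under data
and reverses all crossing signs) and reverse the orientation. -/
def vmirror (a : KCode) : KCode := (a.map (fun p => ⟨p.id, p.isOver, -p.sign⟩)).reverse

/-- Rename the crossings of a code by `f`. -/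
def relabel (f : ℕ → ℕ) (a : KCode) : KCode := a.map (fun p => { p with id := f p.id })

/-! ## Links -/

/-- A link code: a list of circle components. -/
abbrev LCode := List KCode

/-- Validity of a link code: the crossing data is globally consistent. -/
def ValidLink (L : LCode) : Prop := ValidK L.flatten

def crossIdsL (L : LCode) : List ℕ := crossIds L.flatten

def sgnL (L : LCode) (i : ℕ) : ℤ := sgn L.flatten i

/-- An affine (integer) labeling of the arcs of a link diagram:
`lab c k` is the label of the arc entering the `k`-th passage of the `c`-th
component; at each classical crossing with left incoming label `a` and right
incoming label `b`, the left outgoing label is `b+1` and the right outgoing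
label is `a-1`, i.e. passing through a passage changes the label by its
increment.  Labels are unchanged at virtual crossings. -/
def IsAffineLabeling (L : LCode) (lab : ℕ → ℕ → ℤ) : Prop :=
  ∀ c, c < L.length → ∀ k, k < (L.getD c []).length →
    lab c ((k + 1) % (L.getD c []).length) =
      lab c k + ((L.getD c []).getD k default).inc

/-- Locations `(component, position)` of the passages of crossing `i` that are
over-passages (`sel = true`) resp. under-passages (`sel = false`). -/
def locs (L : LCode) (i : ℕ) (sel : Bool) : List (ℕ × ℕ) :=
  (List.range L.length).flatMap (fun c =>
    (List.range (L.getD c []).length).filterMap (fun k =>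
      if ((L.getD c []).getD k default).id = i ∧ ((L.getD c []).getD k default).isOver = sel
      then some (c, k) else none))

/-- The weight of crossing `i` of a link diagram with affine labeling `lab`. -/
def wtL (L : LCode) (lab : ℕ → ℕ → ℤ) (i : ℕ) : ℤ :=
  lab ((locs L i true).headD (0, 0)).1 ((locs L i true).headD (0, 0)).2
    - lab ((locs L i false).headD (0, 0)).1 ((locs L i false).headD (0, 0)).2
    - sgnL L i

/-- The affine index polynomial of an affinely labeled link diagram. -/
noncomputable def affPL (L : LCode) (lab : ℕ → ℕ → ℤ) : LaurentPolynomial ℤ :=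
  ((crossIdsL L).map (fun i => (C (sgnL L i)) * (T (wtL L lab i) - 1))).sum

/-- The passages of component `c` whose partner passage lies on a different
component. -/
def crossPassages (L : LCode) (c : ℕ) : KCode :=
  (L.getD c []).filter (fun p =>
    ((L.getD c []).filter (fun q => q.id == p.id)).length == 1)

/-- The algebraic intersection number of component `c` with the union of the
other components: the signed count, in the plane, of the crossings of
component `c` with the other components (the strand crossing to the left
counts `+1`, to the right `−1`). -/
def algInt (L : LCode) (c : ℕ) : ℤ := ((crossPassages L c).map Passage.inc).sum

/-- A multi-component diagram is compatible when every component has algebraic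
intersection number zero with the union of the other components. -/
def Compatible (L : LCode) : Prop := ∀ c < L.length, algInt L c = 0

/-! ## Virtual isotopy

Link codes whose components carry an inert tracking label (a natural number);
the labels are preserved by isotopy and are used to follow components through
the births, deaths and saddles of a cobordism. -/

abbrev LLC := List (ℕ × KCode)

def plainL (L : LLC) : LCode := L.map Prod.snd

def idsOf (L : LLC) : List ℕ := crossIdsL (plainL L)

def pieceIds (L : LLC) : List ℕ := L.map Prod.fst

/-- `ReplC c c' segs segs'`: the circle `c'` is obtained from the circle `c`
by replacing, scanning from left to right, an initial batch of the listed
segments (`u` is replaced by `v` for each pair `(u, v)`), leaving `segs'`. -/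
inductive ReplC : KCode → KCode → List (KCode × KCode) → List (KCode × KCode) → Prop
  | nil (c : KCode) (segs : List (KCode × KCode)) : ReplC c c segs segs
  | cons {y y' : KCode} {segs segs' : List (KCode × KCode)} (x u v : KCode) :
      ReplC y y' segs segs' →
      ReplC (x ++ u ++ y) (x ++ v ++ y') ((u, v) :: segs) segs'

/-- `ReplL L L' segs`: the labeled link `L'` is obtained from `L` by
simultaneously performing all the listed segment replacements, in scanning
order. -/
inductive ReplL : LLC → LLC → List (KCode × KCode) → Prop
  | nil : ReplL [] [] []
  | cons {c c' : KCode} {L L' : LLC} {segs segs' : List (KCode × KCode)} (k : ℕ) :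
      ReplC c c' segs segs' → ReplL L L' segs' → ReplL ((k, c) :: L) ((k, c') :: L') segs

/-- `if b then [p, q] else [q, p]`. -/
def pairOf (b : Bool) (p q : Passage) : KCode := if b then [p, q] else [q, p]

/-- A generating move of oriented virtual isotopy on Gauss codes.  The
constructors `perm`, `rotate`, `rename` are inessential re-encodings; in
particular the virtual Reidemeister moves and the detour move leave the Gauss
code unchanged.  The constructors `r1`, `r2`, `r3` are the oriented classical
Reidemeister moves (`r1` and `r2` are stated as insertions; the inverse moves
are recovered by taking the symmetric closure). -/
inductive MoveStep : LLC → LLC → Prop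
  /-- re-ordering the components -/
  | perm {L L' : LLC} (h : L.Perm L') : MoveStep L L'
  /-- moving the base point of a component -/
  | rotate (k : ℕ) (x y : KCode) (L : LLC) :
      MoveStep ((k, x ++ y) :: L) ((k, y ++ x) :: L)
  /-- renaming the crossings injectively -/
  | rename {L : LLC} (f : ℕ → ℕ) (hf : Function.Injective f) :
      MoveStep L (L.map (fun c => (c.1, relabel f c.2)))
  /-- first Reidemeister move: insertion of a kink with a fresh crossing `i` -/
  | r1 {L L' : LLC} (i : ℕ) (o : Bool) (s : ℤ) (hs : s = 1 ∨ s = -1) (hi : i ∉ idsOf L)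
      (h : ReplL L L' [([], [⟨i, o, s⟩, ⟨i, !o, s⟩])]) : MoveStep L L'
  /-- second Reidemeister move: one strand slides across another, creating two
  fresh crossings `i, j` with opposite signs; `o` records whether the first
  strand passes over, `ord` the relative orientation of the strands. -/
  | r2 {L L' : LLC} (i j : ℕ) (o ord : Bool) (s : ℤ) (hs : s = 1 ∨ s = -1)
      (hij : i ≠ j) (hi : i ∉ idsOf L) (hj : j ∉ idsOf L)
      (h : ReplL L L'
        [([], [⟨i, o, s⟩, ⟨j, o, -s⟩]),
         ([], if ord then [⟨j, !o, -s⟩, ⟨i, !o, s⟩] else [⟨i, !o, s⟩, ⟨j, !o, -s⟩])]) :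
      MoveStep L L'
  /-- third Reidemeister move: a strand slides across a crossing.  Crossing
  `i` joins the top and the middle strand, `j` the top and the bottom strand,
  `k` the middle and the bottom strand; on each of the three strands the
  corresponding pair of adjacent passages is transposed.  The product of the
  three signs is `+1`, and the orders of the pairs along the strands are
  correlated with the signs as dictated by the orientations of the three
  strands (`t` records the order along the top strand). -/
  | r3 {L L' : LLC} (i j k : ℕ) (si sj sk : ℤ)
      (hsi : si = 1 ∨ si = -1) (hsj : sj = 1 ∨ sj = -1) (hsk : sk = 1 ∨ sk = -1)
      (hprod : si * sj * sk = 1)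
      (hij : i ≠ j) (hik : i ≠ k) (hjk : j ≠ k)
      (t : Bool) (segs : List (KCode × KCode))
      (hsegs : segs.Perm
        [(pairOf t ⟨i, true, si⟩ ⟨j, true, sj⟩,
          pairOf (!t) ⟨i, true, si⟩ ⟨j, true, sj⟩),
         (pairOf (t == (sj * sk == 1)) ⟨i, false, si⟩ ⟨k, true, sk⟩,
          pairOf (!(t == (sj * sk == 1))) ⟨i, false, si⟩ ⟨k, true, sk⟩),
         (pairOf (t == (si * sk == 1)) ⟨j, false, sj⟩ ⟨k, false, sk⟩,
          pairOf (!(t == (si * sk == 1))) ⟨j, false, sj⟩ ⟨k, false, sk⟩)])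
      (h : ReplL L L' segs) : MoveStep L L'

/-- Oriented virtual isotopy: the equivalence relation generated by the
classical Reidemeister moves, the virtual Reidemeister moves and the detour
move (the latter two being invisible on Gauss codes). -/
def Isotopic : LLC → LLC → Prop := Relation.EqvGen MoveStep

/-! ## Cobordism

A cobordism is a sequence of isotopies, births and deaths of unknotted
circles, and oriented saddle moves.  The schema of a cobordism is the abstract
surface it generates; we track its connected pieces through the component
labels, the genus of each piece, and the total genus of the pieces that have
been closed off, so that the genus of the schema is well defined. -/

/-- A state of a cobordism in progress: the current labeled link diagram (the
label of a circle names the surface piece it bounds), the genus of each piece,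
and the accumulated genus of closed-off pieces. -/
structure CobState where
  link : LLC
  genus : ℕ → ℕ
  closed : ℕ

/-- One step of a virtual cobordism. -/
inductive CobStep : CobState → CobState → Prop
  /-- a virtual isotopy move -/
  | isot {L L' : LLC} (g : ℕ → ℕ) (c : ℕ) (h : MoveStep L L') :
      CobStep ⟨L, g, c⟩ ⟨L', g, c⟩
  /-- birth of an unknotted circle, starting a fresh piece of genus `0` -/
  | birth (k : ℕ) (L : LLC) (g : ℕ → ℕ) (c : ℕ) (hk : k ∉ pieceIds L) :
      CobStep ⟨L, g, c⟩ ⟨(k, []) :: L, Function.update g k 0, c⟩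
  /-- death of an unknotted circle whose piece still has other boundary -/
  | death_keep (k : ℕ) (L : LLC) (g : ℕ → ℕ) (c : ℕ) (hk : k ∈ pieceIds L) :
      CobStep ⟨(k, []) :: L, g, c⟩ ⟨L, g, c⟩
  /-- death of an unknotted circle closing off its piece -/
  | death_close (k : ℕ) (L : LLC) (g : ℕ → ℕ) (c : ℕ) (hk : k ∉ pieceIds L) :
      CobStep ⟨(k, []) :: L, g, c⟩ ⟨L, g, c + g k⟩
  /-- oriented saddle splitting one circle into two (genus unchanged) -/
  | saddle_split (k : ℕ) (x y : KCode) (L : LLC) (g : ℕ → ℕ) (c : ℕ) :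
      CobStep ⟨(k, x ++ y) :: L, g, c⟩ ⟨(k, x) :: (k, y) :: L, g, c⟩
  /-- oriented saddle merging two boundary circles of the same piece
  (the genus of the piece increases by one) -/
  | saddle_merge_same (k : ℕ) (x y : KCode) (L : LLC) (g : ℕ → ℕ) (c : ℕ) :
      CobStep ⟨(k, x) :: (k, y) :: L, g, c⟩
        ⟨(k, x ++ y) :: L, Function.update g k (g k + 1), c⟩
  /-- oriented saddle merging boundary circles of two different pieces
  (the pieces merge and their genera add) -/
  | saddle_merge_diff (j k : ℕ) (x y : KCode) (L : LLC) (g : ℕ → ℕ) (c : ℕ)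
      (hjk : j ≠ k) :
      CobStep ⟨(j, x) :: (k, y) :: L, g, c⟩
        ⟨(j, x ++ y) :: (L.map fun p => if p.1 = k then (j, p.2) else p),
          Function.update (Function.update g j (g j + g k)) k 0, c⟩

/-- A virtual cobordism: a finite sequence of cobordism steps. -/
def Cob : CobState → CobState → Prop := Relation.ReflTransGen CobStep

/-- `L` and `L'` cobound a virtual cobordism (of some genus). -/
def Cobordant (L L' : LLC) : Prop :=
  ∃ g' c', Cob ⟨L, fun _ => 0, 0⟩ ⟨L', g', c'⟩

/-- The knot `a` bounds a virtual surface schema of genus `G`: there is a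
virtual cobordism from `a` to the empty link, and `G` is the total genus of
the pieces of its schema. -/
def BoundsGenus (a : KCode) (G : ℕ) : Prop :=
  ∃ g' : ℕ → ℕ, Cob ⟨[(0, a)], fun _ => 0, 0⟩ ⟨[], g', G⟩

/-! ## Concordance

A genus-zero cobordism (concordance) is one in which every critical point is
paired: each birth is paired with a canceling saddle and each death with a
canceling saddle.  An elementary concordance is a birth followed (after
isotopy) by a saddle amalgamating the born circle, or a saddle splitting off a
circle that (after isotopy) dies. -/

/-- One step of a concordance. -/
inductive ConcStep : LLC → LLC → Prop
  /-- a virtual isotopy -/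
  | isot {L L' : LLC} (h : Isotopic L L') : ConcStep L L'
  /-- elementary concordance: birth of an unknotted circle (tracked by the
  fresh label `k`), isotopy, then an oriented saddle amalgamating the born
  circle with another component -/
  | birth_saddle {L rest : LLC} (j k : ℕ) (x y : KCode)
      (hk : k ∉ pieceIds L)
      (h : Isotopic ((k, []) :: L) ((j, x) :: (k, y) :: rest)) :
      ConcStep L ((j, x ++ y) :: rest)
  /-- elementary concordance: an oriented saddle splitting off a circle
  (tracked by the fresh label `k`) which after isotopy is an unknotted,
  unlinked circle and dies -/
  | saddle_death {M rest : LLC} (j k : ℕ) (x y : KCode)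
      (hk : k ∉ pieceIds ((j, x ++ y) :: M))
      (h : Isotopic ((j, x) :: (k, y) :: M) ((k, []) :: rest)) :
      ConcStep ((j, x ++ y) :: M) rest

/-- Virtual concordance: genus-zero virtual cobordism. -/
def Concordant : LLC → LLC → Prop := Relation.EqvGen ConcStep

/-- Virtual concordance of knots. -/
def ConcordantK (a b : KCode) : Prop := Concordant [(0, a)] [(0, b)]

/-- The unknot: a circle with no classical crossings. -/
def unknotCode : KCode := []

/-- A virtual knot is (virtually) slice when it is virtually concordant to
the unknot. -/
def SliceK (a : KCode) : Prop := ConcordantK a unknotCode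

/-! ## Seifert circles and faces -/

/-- The position of the other passage of the crossing visited at position `k`. -/
def partnerIdx (a : KCode) (k : ℕ) : ℕ :=
  ((List.range a.length).filter
    (fun j => j != k && (a.getD j default).id == (a.getD k default).id)).headD 0

/-- Traversal of the diagram obtained by the oriented smoothing of every
classical crossing: from the arc entering passage `k+1` one exits along the
arc leaving the partner passage. -/
def seifNext (a : KCode) (k : ℕ) : ℕ := partnerIdx a ((k + 1) % a.length)

/-- A canonical representative of the Seifert circle through arc `k`. -/
def seifRep (a : KCode) (k : ℕ) : ℕ :=
  ((List.range a.length).map (fun t => (seifNext a)^[t] k)).foldr min k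

/-- The number of (virtual) Seifert circles: the number of cycles of the
oriented smoothing of all classical crossings.  A crossingless circle is a
single Seifert circle. -/
def seifertCount (a : KCode) : ℕ :=
  if a.length = 0 then 1 else ((List.range a.length).map (seifRep a)).dedup.length

/-- The counterclockwise-next edge-end around a crossing.  An edge-end is a
pair (position, isIn): the head (`isIn = true`) or the tail (`isIn = false`)
of an arc at the passage at that position. -/
def nextEnd (a : KCode) (e : ℕ × Bool) : ℕ × Bool :=
  let p := a.getD e.1 default
  (partnerIdx a e.1, if p.isOver == (p.sign == 1) then e.2 else !e.2)

/-- The edge-end at which a directed arc (a dart) arrives. -/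
def headEnd (a : KCode) (d : ℕ × Bool) : ℕ × Bool :=
  if d.2 then ((d.1 + 1) % a.length, true) else (d.1, false)

/-- The dart leaving along a given edge-end. -/
def dartFrom (a : KCode) (e : ℕ × Bool) : ℕ × Bool :=
  if e.2 then ((e.1 + a.length - 1) % a.length, false) else (e.1, true)

/-- The face-tracing successor of a dart. -/
def faceNext (a : KCode) (d : ℕ × Bool) : ℕ × Bool :=
  dartFrom a (nextEnd a (headEnd a d))

def encDart (d : ℕ × Bool) : ℕ := 2 * d.1 + (if d.2 then 1 else 0)

/-- A canonical representative of the face through a given dart. -/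
def faceRep (a : KCode) (d : ℕ × Bool) : ℕ :=
  ((List.range (2 * a.length)).map (fun t => encDart ((faceNext a)^[t] d))).foldr
    min (encDart d)

/-- The number of faces of the abstract (ribbon) diagram of a code. -/
def numFaces (a : KCode) : ℕ :=
  (((List.range a.length).flatMap (fun k => [(k, true), (k, false)])).map
    (faceRep a)).dedup.length

/-- A knot code is classical when its underlying abstract diagram is planar,
i.e. (by Euler's formula) when it has `n + 2` faces, `n` being the number of
crossings.  Classical knot diagrams are exactly the virtual knot diagrams
having a realization with no virtual crossings. -/
def IsClassical (a : KCode) : Prop := a = [] ∨ numFaces a = numCross a + 2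

/-! ## Flat diagrams -/

/-- A passage of a flat (no over/under information) virtual knot diagram:
`left = true` when the other strand crosses to the left, so that the affine
label increases by one. -/
structure FlatPassage where
  id : ℕ
  left : Bool
  deriving DecidableEq, Repr

instance : Inhabited FlatPassage := ⟨⟨0, false⟩⟩

/-- The label increment at a flat passage. -/
def FlatPassage.inc (p : FlatPassage) : ℤ := if p.left then 1 else -1

/-- A valid flat knot code: each crossing is traversed exactly twice, once
with increment `+1` and once with increment `-1`. -/
def ValidFlat (a : List FlatPassage) : Prop :=
  ∀ p ∈ a, (a.filter (fun q => q.id == p.id && q.left)).length = 1 ∧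
    (a.filter (fun q => q.id == p.id && !q.left)).length = 1

/-- An affine labeling of a flat knot diagram: `lab k` is the label of the arc
entering the `k`-th passage, and passing a crossing changes the label by the
increment of the passage. -/
def IsFlatLabeling (a : List FlatPassage) (lab : ℕ → ℤ) : Prop :=
  ∀ k, k < a.length → lab ((k + 1) % a.length) = lab k + (a.getD k default).inc

namespace AffPVM

/-- The sign-negation map used by `vmirror`. -/
def negSign (p : Passage) : Passage := ⟨p.id, p.isOver, -p.sign⟩

lemma vmirror_eq (a : KCode) : vmirror a = (a.map negSign).reverse := rfl

lemma inc_negSign (p : Passage) : (negSign p).inc = - p.inc := by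
  simp only [negSign, Passage.inc]
  by_cases h : p.isOver = true <;> simp [h]

lemma sum_map_neg {α : Type*} {β : Type*} [AddCommGroup β] (l : List α) (g : α → β) :
    (l.map (fun x => -g x)).sum = -(l.map g).sum := by
  induction l with
  | nil => simp
  | cons x l ih => simp [ih, neg_add, add_comm]

lemma sum_map_eq_sum_range (g : Passage → ℤ) (l : List Passage) :
    (l.map g).sum = ∑ k ∈ Finset.range l.length, g (l.getD k default) := by
  induction l with
  | nil => simp
  | cons x l ih =>
    rw [List.length_cons, Finset.sum_range_succ']
    simp [ih, add_comm]

lemma exists_of_filter_one {α : Type*} {pred : α → Bool} {l : List α}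
    (h : (l.filter pred).length = 1) : ∃ x ∈ l, pred x = true := by
  rcases List.length_eq_one_iff.mp h with ⟨x, hx⟩
  have hxmem : x ∈ l.filter pred := by simp [hx]
  exact ⟨x, (List.mem_filter.mp hxmem).1, (List.mem_filter.mp hxmem).2⟩

lemma two_le_countP {α : Type*} {pred : α → Bool} {l : List α} {i j : ℕ}
    (hij : i < j) (hj : j < l.length)
    (hpi : pred (l[i]'(lt_trans hij hj)) = true) (hpj : pred l[j] = true) :
    2 ≤ l.countP pred := by
  have h1 : 0 < (l.take (i+1)).countP pred := by
    rw [List.countP_pos_iff]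
    have hlen : i < (l.take (i+1)).length := by simp; omega
    refine ⟨(l.take (i+1))[i]'hlen, List.getElem_mem _, ?_⟩
    rw [List.getElem_take]; exact hpi
  have h2 : 0 < (l.drop (i+1)).countP pred := by
    rw [List.countP_pos_iff]
    have hlen : j - (i+1) < (l.drop (i+1)).length := by simp; omega
    refine ⟨(l.drop (i+1))[j - (i+1)]'hlen, List.getElem_mem _, ?_⟩
    rw [List.getElem_drop]
    simp only [show i + 1 + (j - (i+1)) = j from by omega]
    exact hpj
  calc 2 ≤ (l.take (i+1)).countP pred + (l.drop (i+1)).countP pred := by omega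
    _ = l.countP pred := by rw [← List.countP_append, List.take_append_drop]

lemma filter_one_uniq {α : Type*} {pred : α → Bool} {l : List α}
    (hlen : (l.filter pred).length = 1) {i j : ℕ} (hi : i < l.length) (hj : j < l.length)
    (hpi : pred (l[i]'hi) = true) (hpj : pred (l[j]'hj) = true) : i = j := by
  by_contra hne
  have h2 : 2 ≤ l.countP pred := by
    rcases Nat.lt_or_ge i j with h | h
    · exact two_le_countP h hj hpi hpj
    · exact two_le_countP (by omega : j < i) hi hpj hpi
  rw [List.countP_eq_length_filter, hlen] at h2
  omega

lemma findIdx_mirror {a : KCode} {pred : Passage → Bool}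
    (hcomp : ∀ q, pred (negSign q) = pred q)
    (h1 : (a.filter pred).length = 1) :
    ((a.map negSign).reverse).findIdx pred = a.length - 1 - a.findIdx pred := by
  have hex := exists_of_filter_one h1
  have hk : a.findIdx pred < a.length := List.findIdx_lt_length_of_exists hex
  have hpk : pred (a[a.findIdx pred]'hk) = true := List.findIdx_getElem
  obtain ⟨p, hp, hpp⟩ := hex
  have hexb : ∃ x ∈ (a.map negSign).reverse, pred x = true := by
    refine ⟨negSign p, ?_, by rw [hcomp]; exact hpp⟩
    simp only [List.mem_reverse, List.mem_map]
    exact ⟨p, hp, rfl⟩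
  have hk'lt : ((a.map negSign).reverse).findIdx pred < ((a.map negSign).reverse).length :=
    List.findIdx_lt_length_of_exists hexb
  have hlenb : ((a.map negSign).reverse).length = a.length := by simp
  set k' := ((a.map negSign).reverse).findIdx pred with hk'
  have hk'n : k' < a.length := by omega
  have hbk' : pred (((a.map negSign).reverse)[k']'hk'lt) = true := List.findIdx_getElem
  have hval : ((a.map negSign).reverse)[k']'hk'lt
      = negSign (a[a.length - 1 - k']'(by omega)) := by
    rw [List.getElem_reverse]
    simp
  rw [hval, hcomp] at hbk'
  have := filter_one_uniq h1 (by omega : a.length - 1 - k' < a.length) hk hbk' hpk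
  omega

lemma mem_crossIds_iff {a : KCode} {i : ℕ} : i ∈ crossIds a ↔ ∃ p ∈ a, p.id = i := by
  simp [crossIds]

lemma sgn_eq {a : KCode} (ha : ValidK a) {i : ℕ} {p : Passage}
    (hp : p ∈ a) (hid : p.id = i) : sgn a i = p.sign := by
  have hex : ∃ q ∈ a, (q.id == i) = true := ⟨p, hp, by simp [hid]⟩
  obtain ⟨q, hq⟩ := Option.isSome_iff_exists.mp (List.find?_isSome.mpr hex)
  have hqa := List.mem_of_find?_eq_some hq
  have hqi : q.id = i := by simpa using List.find?_some hq
  have hps : p.sign = q.sign := (ha q hqa).2.2.2 p hp (by rw [hid, hqi])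
  simp [sgn, hq, hps]

lemma filter_over_one {a : KCode} (ha : ValidK a) {i : ℕ} {p : Passage}
    (hp : p ∈ a) (hid : p.id = i) :
    (a.filter (fun q => q.id == i && q.isOver)).length = 1 := by
  have := (ha p hp).2.1
  rwa [hid] at this

lemma filter_under_one {a : KCode} (ha : ValidK a) {i : ℕ} {p : Passage}
    (hp : p ∈ a) (hid : p.id = i) :
    (a.filter (fun q => q.id == i && !q.isOver)).length = 1 := by
  have := (ha p hp).2.2.1
  rwa [hid] at this

lemma total_sum_zero {a : KCode} (ha : ValidK a) : (a.map Passage.inc).sum = 0 := by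
  rw [sum_map_eq_sum_range]
  rw [← Finset.sum_fiberwise_of_maps_to (g := fun k => (a.getD k default).id)
      (t := (crossIds a).toFinset)
      (fun k hk => by
        simp only [Finset.mem_range] at hk
        simp only [List.mem_toFinset, mem_crossIds_iff]
        exact ⟨a.getD k default, by
          rw [List.getD_eq_getElem a default hk]; exact List.getElem_mem _, rfl⟩)
      (fun k => (a.getD k default).inc)]
  apply Finset.sum_eq_zero
  intro i hi
  obtain ⟨p, hp, hid⟩ := mem_crossIds_iff.mp (List.mem_toFinset.mp hi)
  have hO := filter_over_one ha hp hid
  have hU := filter_under_one ha hp hid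
  have hpo : overPos a i < a.length := List.findIdx_lt_length_of_exists (exists_of_filter_one hO)
  have hpu : underPos a i < a.length := List.findIdx_lt_length_of_exists (exists_of_filter_one hU)
  have hpredo : ((a[overPos a i]'hpo).id == i && (a[overPos a i]'hpo).isOver) = true := by
    simp only [overPos] at hpo ⊢
    exact List.findIdx_getElem (p := fun q => q.id == i && q.isOver) (xs := a) (w := hpo)
  have hpredu : ((a[underPos a i]'hpu).id == i && !(a[underPos a i]'hpu).isOver) = true := by
    simp only [underPos] at hpu ⊢
    exact List.findIdx_getElem (p := fun q => q.id == i && !q.isOver) (xs := a) (w := hpu)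
  have ho : (a[overPos a i]'hpo).id = i ∧ (a[overPos a i]'hpo).isOver = true := by
    simpa using hpredo
  have hu : (a[underPos a i]'hpu).id = i ∧ (a[underPos a i]'hpu).isOver = false := by
    simpa using hpredu
  have hne : overPos a i ≠ underPos a i := by
    intro h
    have he : (a[overPos a i]'hpo) = (a[underPos a i]'hpu) := by simp only [h]
    rw [he, hu.2] at ho
    exact Bool.false_ne_true ho.2
  have hset : (Finset.range a.length).filter (fun k => (a.getD k default).id = i)
      = {overPos a i, underPos a i} := by
    ext k
    simp only [Finset.mem_filter, Finset.mem_range, Finset.mem_insert, Finset.mem_singleton]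
    constructor
    · rintro ⟨hk, hkid⟩
      rw [List.getD_eq_getElem a default hk] at hkid
      cases hov : (a[k]'hk).isOver
      · right
        exact filter_one_uniq hU hk hpu (by simp [hkid, hov]) hpredu
      · left
        exact filter_one_uniq hO hk hpo (by simp [hkid, hov]) hpredo
    · rintro (rfl | rfl)
      · exact ⟨hpo, by rw [List.getD_eq_getElem a default hpo]; exact ho.1⟩
      · exact ⟨hpu, by rw [List.getD_eq_getElem a default hpu]; exact hu.1⟩
  rw [hset, Finset.sum_pair hne]
  have hso : (a[overPos a i]'hpo).sign = sgn a i := (sgn_eq ha (List.getElem_mem _) ho.1).symm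
  have hsu : (a[underPos a i]'hpu).sign = sgn a i := (sgn_eq ha (List.getElem_mem _) hu.1).symm
  rw [List.getD_eq_getElem a default hpo, List.getD_eq_getElem a default hpu]
  simp only [Passage.inc, ho.2, hu.2]
  simp [hso, hsu]

lemma labelAt_vmirror {a : KCode} (ha : ValidK a) {k : ℕ} (hk : k ≤ a.length) :
    labelAt (vmirror a) k = labelAt a (a.length - k) := by
  have hS := total_sum_zero ha
  unfold labelAt
  rw [vmirror_eq, List.take_reverse, List.map_reverse, List.sum_reverse, List.length_map,
    ← List.map_drop, List.map_map]
  have hfun : Passage.inc ∘ negSign = fun p => - p.inc := funext fun p => inc_negSign p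
  rw [hfun, sum_map_neg]
  have hsplit : ((a.take (a.length - k)).map Passage.inc).sum
      + ((a.drop (a.length - k)).map Passage.inc).sum = 0 := by
    rw [← List.sum_append, ← List.map_append, List.take_append_drop, hS]
  omega

lemma labelAt_succ {a : KCode} {k : ℕ} (hk : k < a.length) :
    labelAt a (k + 1) = labelAt a k + (a[k]'hk).inc := by
  unfold labelAt
  rw [List.take_succ, List.getElem?_eq_getElem hk, Option.toList_some, List.map_append,
    List.sum_append]
  simp

lemma sgn_vmirror {a : KCode} (ha : ValidK a) {i : ℕ} (hi : ∃ p ∈ a, p.id = i) :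
    sgn (vmirror a) i = - sgn a i := by
  obtain ⟨p, hp, hid⟩ := hi
  have hex : ∃ q ∈ vmirror a, (q.id == i) = true := by
    refine ⟨negSign p, ?_, by simp [negSign, hid]⟩
    rw [vmirror_eq]
    simp only [List.mem_reverse, List.mem_map]
    exact ⟨p, hp, rfl⟩
  obtain ⟨q, hq⟩ := Option.isSome_iff_exists.mp (List.find?_isSome.mpr hex)
  have hqm := List.mem_of_find?_eq_some hq
  have hqi : q.id = i := by simpa using List.find?_some hq
  rw [vmirror_eq] at hqm
  obtain ⟨r, hr, hrq⟩ : ∃ r ∈ a, negSign r = q := by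
    simpa using hqm
  have hri : r.id = i := by rw [← hrq] at hqi; simpa [negSign] using hqi
  have hs : sgn a i = r.sign := sgn_eq ha hr hri
  have hlhs : sgn (vmirror a) i = q.sign := by simp [sgn, hq]
  rw [hlhs, ← hrq, hs]
  simp [negSign]

lemma wt_vmirror {a : KCode} (ha : ValidK a) {i : ℕ} (hi : ∃ p ∈ a, p.id = i) :
    wt (vmirror a) i = wt a i := by
  obtain ⟨p, hp, hid⟩ := hi
  have hO := filter_over_one ha hp hid
  have hU := filter_under_one ha hp hid
  have hpo : overPos a i < a.length := List.findIdx_lt_length_of_exists (exists_of_filter_one hO)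
  have hpu : underPos a i < a.length := List.findIdx_lt_length_of_exists (exists_of_filter_one hU)
  have hOb : overPos (vmirror a) i = a.length - 1 - overPos a i := by
    rw [show overPos (vmirror a) i
        = ((a.map negSign).reverse).findIdx (fun q => q.id == i && q.isOver) from rfl]
    exact findIdx_mirror (fun q => rfl) hO
  have hUb : underPos (vmirror a) i = a.length - 1 - underPos a i := by
    rw [show underPos (vmirror a) i
        = ((a.map negSign).reverse).findIdx (fun q => q.id == i && !q.isOver) from rfl]
    exact findIdx_mirror (fun q => rfl) hU
  have hpredo : ((a[overPos a i]'hpo).id == i && (a[overPos a i]'hpo).isOver) = true := by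
    simp only [overPos] at hpo ⊢
    exact List.findIdx_getElem (p := fun q => q.id == i && q.isOver) (xs := a) (w := hpo)
  have hpredu : ((a[underPos a i]'hpu).id == i && !(a[underPos a i]'hpu).isOver) = true := by
    simp only [underPos] at hpu ⊢
    exact List.findIdx_getElem (p := fun q => q.id == i && !q.isOver) (xs := a) (w := hpu)
  have ho : (a[overPos a i]'hpo).id = i ∧ (a[overPos a i]'hpo).isOver = true := by
    simpa using hpredo
  have hu : (a[underPos a i]'hpu).id = i ∧ (a[underPos a i]'hpu).isOver = false := by
    simpa using hpredu
  have hso : (a[overPos a i]'hpo).sign = sgn a i := (sgn_eq ha (List.getElem_mem _) ho.1).symm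
  have hsu : (a[underPos a i]'hpu).sign = sgn a i := (sgn_eq ha (List.getElem_mem _) hu.1).symm
  have hinco : (a[overPos a i]'hpo).inc = - sgn a i := by
    simp [Passage.inc, ho.2, hso]
  have hincu : (a[underPos a i]'hpu).inc = sgn a i := by
    simp [Passage.inc, hu.2, hsu]
  unfold wt
  rw [hOb, hUb, labelAt_vmirror ha (by omega), labelAt_vmirror ha (by omega),
    sgn_vmirror ha ⟨p, hp, hid⟩,
    show a.length - (a.length - 1 - overPos a i) = overPos a i + 1 from by omega,
    show a.length - (a.length - 1 - underPos a i) = underPos a i + 1 from by omega,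
    labelAt_succ hpo, labelAt_succ hpu, hinco, hincu]
  ring

lemma crossIds_vmirror_perm (a : KCode) : (crossIds (vmirror a)).Perm (crossIds a) := by
  apply (List.perm_ext_iff_of_nodup (List.nodup_dedup _) (List.nodup_dedup _)).mpr
  intro i
  simp [crossIds, vmirror_eq, negSign]

end AffPVM


/-- If `K^!` denotes the vertical mirror image of `K` (the
diagram obtained by reflecting `K` in a plane perpendicular to the plane of
the diagram and reversing the orientation of the result), then
`P_{K^!}(t) = -P_K(t)`. -/
theorem affP_vertical_mirror (a : KCode) (ha : ValidK a) :
    affP (vmirror a) = - affP a := by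
  unfold affP
  have hmap : (crossIds (vmirror a)).map
        (fun i => (C (sgn (vmirror a) i)) * (T (wt (vmirror a) i) - 1))
      = (crossIds (vmirror a)).map
        (fun i => -((C (sgn a i)) * (T (wt a i) - 1))) := by
    apply List.map_congr_left
    intro i hi
    have hex : ∃ p ∈ a, p.id = i := by
      have := (AffPVM.crossIds_vmirror_perm a).mem_iff.mp hi
      exact AffPVM.mem_crossIds_iff.mp this
    rw [AffPVM.sgn_vmirror ha hex, AffPVM.wt_vmirror ha hex, map_neg, neg_mul]
  rw [hmap, ((AffPVM.crossIds_vmirror_perm a).map _).sum_eq, AffPVM.sum_map_neg]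
end

section
/- The affine index polynomial is additive under connected sum: if K # L denotes a connected sum of virtual knot diagrams K and L (obtained by removing an arc from each diagram and joining them), then P_{K # L}(t) = P_K(t) + P_L(t); in particular, for any virtual knot diagram K, P_{K # K^!}(t) = P_K(t) - P_K(t) = 0, where K^! is the vertical mirror image of K. -/
/-!
# Virtual knots and links via signed Gauss codes

A virtual knot or link diagram, up to the virtual Reidemeister moves and the
detour move, is faithfully encoded by its signed oriented Gauss code: the
cyclic sequence, along each component, of passages through the classical
crossings, each passage recording the crossing's name, whether the strand
passes over or under, and the crossing sign.  Virtual crossings and the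
detour move are invisible in this encoding, so oriented virtual isotopy is
generated by the oriented classical Reidemeister moves together with
re-encoding moves (rotation of the base point, permutation of the components,
renaming of the crossings).
-/

open LaurentPolynomial

-- ### helpers

lemma mem_crossIds {l : KCode} {i : ℕ} : i ∈ crossIds l ↔ ∃ p ∈ l, p.id = i := by
  simp [crossIds, List.mem_dedup, List.mem_map]

lemma sum_split {α} (p : α → Bool) (f : α → ℤ) (l : List α) :
    ((l.filter p).map f).sum + ((l.filter (fun x => !(p x))).map f).sum = (l.map f).sum := by
  induction l with
  | nil => simp
  | cons x t ih =>
    by_cases h : p x <;> simp [List.filter_cons, h, ← ih] <;> ring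

lemma validK_filter (l : KCode) (hl : ValidK l) (r : Passage → Bool)
    (hr : ∀ p q : Passage, p.id = q.id → r p = r q) : ValidK (l.filter r) := by
  intro p hp
  rw [List.mem_filter] at hp
  obtain ⟨hpl, hpr⟩ := hp
  obtain ⟨hs, ho, hu, hc⟩ := hl p hpl
  have key : ∀ g : Passage → Bool, (∀ q, g q = true → q.id = p.id) →
      (l.filter r).filter g = l.filter g := by
    intro g hg
    rw [List.filter_filter]
    apply List.filter_congr
    intro x _
    by_cases hgx : g x = true
    · have hid : x.id = p.id := hg x hgx
      have hrx : r x = r p := hr x p hid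
      simp [hgx, hrx, hpr]
    · simp [Bool.eq_false_iff.mpr hgx]
  refine ⟨hs, ?_, ?_, ?_⟩
  · rw [key _ (fun q hq => by simp at hq; exact hq.1)]; exact ho
  · rw [key _ (fun q hq => by simp at hq; exact hq.1)]; exact hu
  · intro q hq hqi
    exact hc q (List.mem_filter.mp hq).1 hqi

lemma sumInc_fiber (l : KCode) (hl : ValidK l) {p : Passage} (hp : p ∈ l) :
    ((l.filter (fun q => q.id == p.id)).map Passage.inc).sum = 0 := by
  obtain ⟨hs, ho, hu, hc⟩ := hl p hp
  have hsplit := sum_split (fun q => q.isOver) Passage.inc (l.filter (fun q => q.id == p.id))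
  rw [List.filter_filter, List.filter_filter] at hsplit
  rw [List.filter_congr (l := l)
      (p := fun a => a.isOver && (a.id == p.id)) (q := fun q => q.id == p.id && q.isOver)
      (fun x _ => Bool.and_comm _ _)] at hsplit
  rw [List.filter_congr (l := l)
      (p := fun a => !a.isOver && (a.id == p.id)) (q := fun q => q.id == p.id && !q.isOver)
      (fun x _ => Bool.and_comm _ _)] at hsplit
  obtain ⟨x, hx⟩ := List.length_eq_one_iff.mp ho
  obtain ⟨y, hy⟩ := List.length_eq_one_iff.mp hu
  rw [hx, hy] at hsplit
  have hxl : x ∈ l.filter (fun q => q.id == p.id && q.isOver) := by rw [hx]; simp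
  have hyl : y ∈ l.filter (fun q => q.id == p.id && !q.isOver) := by rw [hy]; simp
  rw [List.mem_filter] at hxl hyl
  have hx2 := hxl.2; have hy2 := hyl.2
  simp only [Bool.and_eq_true, beq_iff_eq, Bool.not_eq_true'] at hx2 hy2
  have hxs : x.sign = p.sign := hc x hxl.1 hx2.1
  have hys : y.sign = p.sign := hc y hyl.1 hy2.1
  rw [← hsplit]
  simp [Passage.inc, hx2.2, hy2.2, hxs, hys]

lemma sumInc_zero : ∀ (n : ℕ) (l : KCode), l.length ≤ n → ValidK l →
    (l.map Passage.inc).sum = 0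
  | _, [], _, _ => by simp
  | 0, p :: t, h, _ => by simp at h
  | n+1, p :: t, hlen, hv => by
    have hp : p ∈ p :: t := List.mem_cons_self
    have hsplit := sum_split (fun q => q.id == p.id) Passage.inc (p :: t)
    have h1 := sumInc_fiber (p :: t) hv hp
    have hrest : ValidK ((p :: t).filter (fun q => !(q.id == p.id))) := by
      apply validK_filter _ hv
      intro x y hxy; simp [hxy]
    have hlt : ((p :: t).filter (fun q => !(q.id == p.id))).length < (p :: t).length :=
      List.length_filter_lt_length_iff_exists.mpr ⟨p, hp, by simp⟩
    have h2 := sumInc_zero n _ (by simpa using Nat.lt_succ_iff.mp (lt_of_lt_of_le hlt hlen)) hrest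
    rw [h1, h2] at hsplit
    simpa using hsplit.symm

lemma sumInc_eq_zero {l : KCode} (hl : ValidK l) : (l.map Passage.inc).sum = 0 :=
  sumInc_zero l.length l le_rfl hl

-- ### sgn

lemma sgn_eq {l : KCode} {i : ℕ} {s : ℤ} (h1 : ∃ q ∈ l, q.id = i)
    (h2 : ∀ q ∈ l, q.id = i → q.sign = s) : sgn l i = s := by
  obtain ⟨q, hq, hqi⟩ := h1
  have hsome : (l.find? (fun p => p.id == i)).isSome :=
    List.find?_isSome.mpr ⟨q, hq, by simp [hqi]⟩
  obtain ⟨r, hr⟩ := Option.isSome_iff_exists.mp hsome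
  have hrl := List.mem_of_find?_eq_some hr
  have hri : r.id = i := by have := List.find?_some hr; simpa using this
  simp [sgn, hr, h2 r hrl hri]

lemma sgn_valid {l : KCode} (hl : ValidK l) {p : Passage} (hp : p ∈ l) :
    sgn l p.id = p.sign :=
  sgn_eq ⟨p, hp, rfl⟩ (fun q hq hqi => (hl p hp).2.2.2 q hq hqi)

lemma sgn_valid' {l : KCode} (hl : ValidK l) {p : Passage} {i : ℕ} (hp : p ∈ l)
    (hi : p.id = i) : sgn l i = p.sign := by rw [← hi]; exact sgn_valid hl hp

-- ### existence of over/under passages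

lemma over_exists {l : KCode} (hl : ValidK l) {i : ℕ} (hi : i ∈ crossIds l) :
    ∃ q ∈ l, (q.id == i && q.isOver) = true := by
  obtain ⟨p, hp, hpi⟩ := mem_crossIds.mp hi
  obtain ⟨x, hx⟩ := List.length_eq_one_iff.mp (hl p hp).2.1
  have hxl : x ∈ l.filter (fun q => q.id == p.id && q.isOver) := by rw [hx]; simp
  rw [List.mem_filter] at hxl
  refine ⟨x, hxl.1, ?_⟩
  have := hxl.2
  simp only [Bool.and_eq_true, beq_iff_eq] at this ⊢
  exact ⟨this.1.trans hpi, this.2⟩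

lemma under_exists {l : KCode} (hl : ValidK l) {i : ℕ} (hi : i ∈ crossIds l) :
    ∃ q ∈ l, (q.id == i && !q.isOver) = true := by
  obtain ⟨p, hp, hpi⟩ := mem_crossIds.mp hi
  obtain ⟨x, hx⟩ := List.length_eq_one_iff.mp (hl p hp).2.2.1
  have hxl : x ∈ l.filter (fun q => q.id == p.id && !q.isOver) := by rw [hx]; simp
  rw [List.mem_filter] at hxl
  refine ⟨x, hxl.1, ?_⟩
  have := hxl.2
  simp only [Bool.and_eq_true, beq_iff_eq] at this ⊢
  exact ⟨this.1.trans hpi, this.2⟩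

-- ### labelAt

lemma labelAt_append_left (a b : KCode) {k : ℕ} (hk : k ≤ a.length) :
    labelAt (a ++ b) k = labelAt a k := by
  simp [labelAt, List.take_append_of_le_length hk]

lemma labelAt_append_right (a b : KCode) (k : ℕ) :
    labelAt (a ++ b) (a.length + k) = (a.map Passage.inc).sum + labelAt b k := by
  rw [labelAt, List.take_append, List.map_append, List.sum_append, labelAt]
  rw [List.take_of_length_le (Nat.le_add_right _ _), Nat.add_sub_cancel_left]

lemma overPos_le (a : KCode) (i : ℕ) : overPos a i ≤ a.length := List.findIdx_le_length

lemma underPos_le (a : KCode) (i : ℕ) : underPos a i ≤ a.length := List.findIdx_le_length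

lemma labelAt_succ (a : KCode) {k : ℕ} (hk : k < a.length) :
    labelAt a (k + 1) = labelAt a k + Passage.inc a[k] := by
  have h := List.sum_take_succ (L := a.map Passage.inc) k (by simpa using hk)
  simpa [labelAt, List.map_take] using h

-- ### wt / sgn under append

lemma sgn_append_left {a b : KCode} (ha : ValidK a)
    (hdisj : ∀ i ∈ crossIds a, i ∉ crossIds b) {i : ℕ} (hi : i ∈ crossIds a) :
    sgn (a ++ b) i = sgn a i := by
  obtain ⟨p, hp, hpi⟩ := mem_crossIds.mp hi
  apply sgn_eq ⟨p, List.mem_append_left b hp, hpi⟩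
  intro q hq hqi
  rcases List.mem_append.mp hq with hqa | hqb
  · rw [← sgn_valid' ha hqa hqi]
  · exact absurd (mem_crossIds.mpr ⟨q, hqb, hqi⟩) (hdisj i hi)

lemma sgn_append_right {a b : KCode} (hb : ValidK b)
    (hdisj : ∀ i ∈ crossIds a, i ∉ crossIds b) {i : ℕ} (hi : i ∈ crossIds b) :
    sgn (a ++ b) i = sgn b i := by
  obtain ⟨p, hp, hpi⟩ := mem_crossIds.mp hi
  apply sgn_eq ⟨p, List.mem_append_right a hp, hpi⟩
  intro q hq hqi
  rcases List.mem_append.mp hq with hqa | hqb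
  · exact absurd (hdisj i (mem_crossIds.mpr ⟨q, hqa, hqi⟩)) (by simpa using hi)
  · rw [← sgn_valid' hb hqb hqi]

lemma findIdx_append_left {α} {p : α → Bool} {l₁ l₂ : List α} (h : ∃ x ∈ l₁, p x = true) :
    (l₁ ++ l₂).findIdx p = l₁.findIdx p := by
  rw [List.findIdx_append, if_pos (List.findIdx_lt_length_of_exists h)]

lemma findIdx_append_right {α} {p : α → Bool} {l₁ l₂ : List α} (h : ∀ x ∈ l₁, p x = false) :
    (l₁ ++ l₂).findIdx p = l₁.length + l₂.findIdx p := by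
  rw [List.findIdx_append, if_neg, Nat.add_comm]
  rw [List.findIdx_eq_length.mpr h]
  simp

lemma id_not_in_left {a b : KCode} (hdisj : ∀ i ∈ crossIds a, i ∉ crossIds b)
    {i : ℕ} (hi : i ∈ crossIds b) : ∀ x ∈ a, x.id ≠ i := by
  intro x hx hxi
  exact hdisj i (mem_crossIds.mpr ⟨x, hx, hxi⟩) hi

lemma wt_append_left {a b : KCode} (ha : ValidK a)
    (hdisj : ∀ i ∈ crossIds a, i ∉ crossIds b) {i : ℕ} (hi : i ∈ crossIds a) :
    wt (a ++ b) i = wt a i := by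
  have ho : overPos (a ++ b) i = overPos a i := findIdx_append_left (over_exists ha hi)
  have hu : underPos (a ++ b) i = underPos a i := findIdx_append_left (under_exists ha hi)
  rw [wt, wt, ho, hu, sgn_append_left ha hdisj hi,
    labelAt_append_left a b (overPos_le a i),
    labelAt_append_left a b (underPos_le a i)]

lemma wt_append_right {a b : KCode} (ha : ValidK a) (hb : ValidK b)
    (hdisj : ∀ i ∈ crossIds a, i ∉ crossIds b) {i : ℕ} (hi : i ∈ crossIds b) :
    wt (a ++ b) i = wt b i := by
  have hno : ∀ x ∈ a, x.id ≠ i := id_not_in_left hdisj hi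
  have ho : overPos (a ++ b) i = a.length + overPos b i :=
    findIdx_append_right (fun x hx => by simp [hno x hx])
  have hu : underPos (a ++ b) i = a.length + underPos b i :=
    findIdx_append_right (fun x hx => by simp [hno x hx])
  rw [wt, wt, ho, hu, sgn_append_right hb hdisj hi,
    labelAt_append_right, labelAt_append_right, sumInc_eq_zero ha]
  ring

lemma dedup_append_disj {l₁ l₂ : List ℕ} (h : ∀ x ∈ l₁, x ∉ l₂) :
    (l₁ ++ l₂).dedup = l₁.dedup ++ l₂.dedup := by
  induction l₁ with
  | nil => simp
  | cons x t ih =>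
    have hx : x ∉ l₂ := h x (by simp)
    have ht : ∀ y ∈ t, y ∉ l₂ := fun y hy => h y (by simp [hy])
    by_cases hxt : x ∈ t
    · rw [List.cons_append, List.dedup_cons_of_mem (by simp [hxt]), ih ht,
        List.dedup_cons_of_mem hxt]
    · rw [List.cons_append, List.dedup_cons_of_notMem (by simp [hxt, hx]), ih ht,
        List.dedup_cons_of_notMem hxt]
      rfl

lemma crossIds_append {a b : KCode} (hdisj : ∀ i ∈ crossIds a, i ∉ crossIds b) :
    crossIds (a ++ b) = crossIds a ++ crossIds b := by
  rw [crossIds, List.map_append, dedup_append_disj]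
  · rfl
  · intro x hx hx2
    exact hdisj x (by simpa [crossIds, List.mem_dedup] using hx)
      (by simpa [crossIds, List.mem_dedup] using hx2)

lemma affP_append {a b : KCode} (ha : ValidK a) (hb : ValidK b)
    (hdisj : ∀ i ∈ crossIds a, i ∉ crossIds b) :
    affP (a ++ b) = affP a + affP b := by
  rw [affP, crossIds_append hdisj, List.map_append, List.sum_append, affP, affP]
  congr 1
  · apply congrArg
    apply List.map_congr_left
    intro i hi
    rw [sgn_append_left ha hdisj hi, wt_append_left ha hdisj hi]
  · apply congrArg
    apply List.map_congr_left
    intro i hi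
    rw [sgn_append_right hb hdisj hi, wt_append_right ha hb hdisj hi]

-- ### unique positions and findIdx on reverses

lemma filter_one_unique_pos {α} [Inhabited α] {p : α → Bool} :
    ∀ {l : List α}, (l.filter p).length = 1 →
    ∃ k, ∃ (hk : k < l.length), p l[k] = true ∧
      ∀ j (hj : j < l.length), j ≠ k → p l[j] = false
  | [], h => by simp at h
  | x :: t, h => by
    by_cases hx : p x = true
    · have h0 : (t.filter p).length = 0 := by
        rw [List.filter_cons, if_pos hx] at h
        simpa using h
      have ht : ∀ y ∈ t, p y = false := by
        intro y hy
        have := List.filter_eq_nil_iff.mp (List.length_eq_zero_iff.mp h0) y hy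
        exact Bool.eq_false_iff.mpr this
      refine ⟨0, by simp, hx, ?_⟩
      rintro (_ | j) hj hne
      · exact absurd rfl hne
      · exact ht _ (List.getElem_mem _)
    · rw [List.filter_cons, if_neg hx] at h
      obtain ⟨k, hk, hpk, huniq⟩ := filter_one_unique_pos (l := t) h
      refine ⟨k + 1, by simpa using Nat.succ_lt_succ hk, hpk, ?_⟩
      rintro (_ | j) hj hne
      · exact Bool.eq_false_iff.mpr hx
      · exact huniq j (by simpa using hj) (by omega)

lemma findIdx_of_unique {α} {p : α → Bool} {l : List α} {k : ℕ} (hk : k < l.length)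
    (hpk : p l[k] = true) (huniq : ∀ j (hj : j < l.length), j ≠ k → p l[j] = false) :
    l.findIdx p = k := by
  rw [List.findIdx_eq hk]
  exact ⟨hpk, fun j hj => huniq j (hj.trans hk) (Nat.ne_of_lt hj)⟩

lemma findIdx_reverse_of_unique {α} {p : α → Bool} {l : List α} {k : ℕ} (hk : k < l.length)
    (hpk : p l[k] = true) (huniq : ∀ j (hj : j < l.length), j ≠ k → p l[j] = false) :
    l.reverse.findIdx p = l.length - 1 - k := by
  have hlen : l.reverse.length = l.length := l.length_reverse
  have h1 : l.length - 1 - k < l.reverse.length := by omega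
  rw [List.findIdx_eq h1]
  constructor
  · have : l.reverse[l.length - 1 - k] = l[k] := by
      rw [List.getElem_reverse]
      congr 1
      omega
    rw [this]; exact hpk
  · intro j hj
    have hjlen : j < l.reverse.length := by omega
    rw [List.getElem_reverse]
    exact huniq _ (by omega) (by omega)

-- ### vmirror

def negP (p : Passage) : Passage := ⟨p.id, p.isOver, -p.sign⟩

lemma vmirror_eq (a : KCode) : vmirror a = (a.map negP).reverse := rfl

@[simp] lemma negP_id (p : Passage) : (negP p).id = p.id := rfl
@[simp] lemma negP_isOver (p : Passage) : (negP p).isOver = p.isOver := rfl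
@[simp] lemma negP_sign (p : Passage) : (negP p).sign = -p.sign := rfl

lemma negP_inc (p : Passage) : (negP p).inc = -p.inc := by
  by_cases h : p.isOver <;> simp [Passage.inc, negP, h]

lemma sum_map_neg' {α β} [AddCommGroup β] (l : List α) (f : α → β) :
    (l.map (fun x => -(f x))).sum = -((l.map f).sum) := by
  induction l with
  | nil => simp
  | cons x t ih => simp [ih, neg_add]; abel

lemma labelAt_vmirror {a : KCode} (htot : (a.map Passage.inc).sum = 0) {k : ℕ}
    (hk : k ≤ a.length) :
    labelAt (vmirror a) k = labelAt a (a.length - k) := by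
  rw [vmirror_eq, labelAt, List.take_reverse, List.length_map, List.map_reverse,
    List.sum_reverse, ← List.map_drop, List.map_map]
  have hcomp : ∀ p : Passage, (Passage.inc ∘ negP) p = -(Passage.inc p) := fun p => negP_inc p
  rw [List.map_congr_left (fun p _ => hcomp p), sum_map_neg']
  have hsplit := List.sum_take_add_sum_drop (a.map Passage.inc) (a.length - k)
  rw [htot] at hsplit
  rw [labelAt, List.map_take, List.map_drop]
  linarith

lemma pos_transfer {p : Passage → Bool} {a : KCode}
    (hp : ∀ x, p (negP x) = p x) {k : ℕ} (hk : k < a.length)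
    (hpk : p a[k] = true) (huniq : ∀ j (hj : j < a.length), j ≠ k → p a[j] = false) :
    (vmirror a).findIdx p = a.length - 1 - k := by
  rw [vmirror_eq]
  have hk' : k < (a.map negP).length := by simpa using hk
  have h1 : p ((a.map negP)[k]) = true := by rw [List.getElem_map, hp]; exact hpk
  have h2 : ∀ j (hj : j < (a.map negP).length), j ≠ k → p ((a.map negP)[j]) = false := by
    intro j hj hne
    rw [List.getElem_map, hp]
    exact huniq j (by simpa using hj) hne
  have := findIdx_reverse_of_unique hk' h1 h2
  simpa using this

lemma over_unique {a : KCode} (ha : ValidK a) {i : ℕ} (hi : i ∈ crossIds a) :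
    ∃ k, ∃ (hk : k < a.length), ((a[k].id == i && a[k].isOver) = true) ∧
      (∀ j (hj : j < a.length), j ≠ k → (a[j].id == i && a[j].isOver) = false) ∧
      overPos a i = k := by
  obtain ⟨p, hp, hpi⟩ := mem_crossIds.mp hi
  have hf : (a.filter (fun q => q.id == i && q.isOver)).length = 1 := by
    have := (ha p hp).2.1
    rwa [hpi] at this
  obtain ⟨k, hk, h1, h2⟩ := filter_one_unique_pos hf
  exact ⟨k, hk, h1, h2, findIdx_of_unique hk h1 h2⟩

lemma under_unique {a : KCode} (ha : ValidK a) {i : ℕ} (hi : i ∈ crossIds a) :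
    ∃ k, ∃ (hk : k < a.length), ((a[k].id == i && !a[k].isOver) = true) ∧
      (∀ j (hj : j < a.length), j ≠ k → (a[j].id == i && !a[j].isOver) = false) ∧
      underPos a i = k := by
  obtain ⟨p, hp, hpi⟩ := mem_crossIds.mp hi
  have hf : (a.filter (fun q => q.id == i && !q.isOver)).length = 1 := by
    have := (ha p hp).2.2.1
    rwa [hpi] at this
  obtain ⟨k, hk, h1, h2⟩ := filter_one_unique_pos hf
  exact ⟨k, hk, h1, h2, findIdx_of_unique hk h1 h2⟩

lemma mem_vmirror {a : KCode} {q : Passage} : q ∈ vmirror a ↔ ∃ p ∈ a, negP p = q := by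
  rw [vmirror_eq, List.mem_reverse, List.mem_map]

lemma sgn_vmirror {a : KCode} (ha : ValidK a) {i : ℕ} (hi : i ∈ crossIds a) :
    sgn (vmirror a) i = - sgn a i := by
  obtain ⟨p, hp, hpi⟩ := mem_crossIds.mp hi
  apply sgn_eq
  · exact ⟨negP p, mem_vmirror.mpr ⟨p, hp, rfl⟩, by simpa using hpi⟩
  · intro q hq hqi
    obtain ⟨r, hr, rfl⟩ := mem_vmirror.mp hq
    have hri : r.id = i := by simpa using hqi
    rw [negP_sign, sgn_valid' ha hr hri]

lemma wt_vmirror {a : KCode} (ha : ValidK a) {i : ℕ} (hi : i ∈ crossIds a) :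
    wt (vmirror a) i = wt a i := by
  obtain ⟨ko, hko, hpo, huo, heo⟩ := over_unique ha hi
  obtain ⟨ku, hku, hpu, huu, heu⟩ := under_unique ha hi
  have hvo : overPos (vmirror a) i = a.length - 1 - ko :=
    pos_transfer (p := fun q => q.id == i && q.isOver) (fun x => rfl) hko hpo huo
  have hvu : underPos (vmirror a) i = a.length - 1 - ku :=
    pos_transfer (p := fun q => q.id == i && !q.isOver) (fun x => rfl) hku hpu huu
  have htot := sumInc_eq_zero ha
  rw [wt, wt, hvo, hvu, sgn_vmirror ha hi, heo, heu,
    labelAt_vmirror htot (by omega), labelAt_vmirror htot (by omega)]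
  have e1 : a.length - (a.length - 1 - ko) = ko + 1 := by omega
  have e2 : a.length - (a.length - 1 - ku) = ku + 1 := by omega
  rw [e1, e2, labelAt_succ a hko, labelAt_succ a hku]
  simp only [Bool.and_eq_true, beq_iff_eq, Bool.not_eq_true'] at hpo hpu
  have hso : sgn a i = a[ko].sign := sgn_valid' ha (List.getElem_mem hko) hpo.1
  have hsu : sgn a i = a[ku].sign := sgn_valid' ha (List.getElem_mem hku) hpu.1
  have hinc1 : Passage.inc a[ko] = -(sgn a i) := by
    rw [hso]; simp [Passage.inc, hpo.2]
  have hinc2 : Passage.inc a[ku] = sgn a i := by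
    rw [hsu]; simp [Passage.inc, hpu.2]
  rw [hinc1, hinc2]
  ring

lemma crossIds_vmirror_perm (a : KCode) : (crossIds (vmirror a)).Perm (crossIds a) := by
  refine (List.perm_ext_iff_of_nodup (List.nodup_dedup _) (List.nodup_dedup _)).mpr ?_
  intro i
  constructor
  · intro h
    obtain ⟨p, hp, hpi⟩ := mem_crossIds.mp h
    obtain ⟨q, hq, rfl⟩ := mem_vmirror.mp hp
    exact mem_crossIds.mpr ⟨q, hq, by simpa using hpi⟩
  · intro h
    obtain ⟨p, hp, hpi⟩ := mem_crossIds.mp h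
    exact mem_crossIds.mpr ⟨negP p, mem_vmirror.mpr ⟨p, hp, rfl⟩, by simpa using hpi⟩

lemma affP_vmirror {a : KCode} (ha : ValidK a) : affP (vmirror a) = - affP a := by
  rw [affP, affP]
  rw [((crossIds_vmirror_perm a).map
    (fun i => C (sgn (vmirror a) i) * (T (wt (vmirror a) i) - 1))).sum_eq]
  have hterm : ∀ i ∈ crossIds a, C (sgn (vmirror a) i) * (T (wt (vmirror a) i) - 1)
      = -(C (sgn a i) * (T (wt a i) - 1)) := by
    intro i hi
    rw [sgn_vmirror ha hi, wt_vmirror ha hi, map_neg, neg_mul]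
  rw [List.map_congr_left hterm, sum_map_neg']

lemma validK_vmirror {a : KCode} (ha : ValidK a) : ValidK (vmirror a) := by
  intro q hq
  obtain ⟨p, hp, rfl⟩ := mem_vmirror.mp hq
  obtain ⟨hs, ho, hu, hc⟩ := ha p hp
  have hfilt : ∀ g : Passage → Bool, (∀ x, g (negP x) = g x) →
      ((vmirror a).filter g).length = (a.filter g).length := by
    intro g hg
    rw [vmirror_eq, List.filter_reverse, List.length_reverse, List.filter_map,
      List.length_map]
    congr 1
    exact List.filter_congr (fun x _ => hg x)
  refine ⟨by rcases hs with h | h <;> simp [h], ?_, ?_, ?_⟩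
  · simp only [negP_id]
    rw [hfilt (fun q => q.id == p.id && q.isOver) (fun x => rfl)]
    exact ho
  · simp only [negP_id]
    rw [hfilt (fun q => q.id == p.id && !q.isOver) (fun x => rfl)]
    exact hu
  · intro q hq hqi
    obtain ⟨r, hr, rfl⟩ := mem_vmirror.mp hq
    have : r.id = p.id := by simpa using hqi
    rw [negP_sign, negP_sign, hc r hr this]

-- ### relabel

lemma beq_f {f : ℕ → ℕ} (hf : Function.Injective f) (x i : ℕ) :
    (f x == f i) = (x == i) := by
  by_cases h : x = i
  · simp [h]
  · simp [h, hf.ne h]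

lemma dedup_map_inj {f : ℕ → ℕ} (hf : Function.Injective f) (l : List ℕ) :
    (l.map f).dedup = l.dedup.map f := by
  induction l with
  | nil => simp
  | cons x t ih =>
    by_cases hx : x ∈ t
    · rw [List.map_cons, List.dedup_cons_of_mem (List.mem_map_of_mem hx),
        List.dedup_cons_of_mem hx, ih]
    · rw [List.map_cons, List.dedup_cons_of_notMem (fun hm => ?_),
        List.dedup_cons_of_notMem hx, ih, List.map_cons]
      obtain ⟨y, hy, hxy⟩ := List.mem_map.mp hm
      exact hx (hf hxy ▸ hy)

lemma crossIds_relabel {f : ℕ → ℕ} (hf : Function.Injective f) (a : KCode) :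
    crossIds (relabel f a) = (crossIds a).map f := by
  rw [crossIds, relabel, List.map_map, crossIds]
  rw [show (Passage.id ∘ fun p => { p with id := f p.id }) = f ∘ Passage.id from rfl]
  rw [← List.map_map, dedup_map_inj hf]

lemma findIdx_map' {α β} (g : α → β) (l : List α) (p : β → Bool) :
    (l.map g).findIdx p = l.findIdx (fun x => p (g x)) := by
  induction l with
  | nil => rfl
  | cons x t ih => simp [List.findIdx_cons, ih]

lemma overPos_relabel {f : ℕ → ℕ} (hf : Function.Injective f) (a : KCode) (i : ℕ) :
    overPos (relabel f a) (f i) = overPos a i := by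
  rw [overPos, relabel, findIdx_map', overPos]
  congr 1
  funext x
  show ((f x.id == f i) && x.isOver) = ((x.id == i) && x.isOver)
  rw [beq_f hf]

lemma underPos_relabel {f : ℕ → ℕ} (hf : Function.Injective f) (a : KCode) (i : ℕ) :
    underPos (relabel f a) (f i) = underPos a i := by
  rw [underPos, relabel, findIdx_map', underPos]
  congr 1
  funext x
  show ((f x.id == f i) && !x.isOver) = ((x.id == i) && !x.isOver)
  rw [beq_f hf]

lemma labelAt_relabel (f : ℕ → ℕ) (a : KCode) (k : ℕ) :
    labelAt (relabel f a) k = labelAt a k := by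
  rw [labelAt, labelAt, relabel, ← List.map_take, List.map_map]
  apply congrArg
  apply List.map_congr_left
  intro p _
  rfl

lemma sgn_relabel {f : ℕ → ℕ} (hf : Function.Injective f) {a : KCode} (ha : ValidK a)
    {i : ℕ} (hi : i ∈ crossIds a) : sgn (relabel f a) (f i) = sgn a i := by
  obtain ⟨p, hp, hpi⟩ := mem_crossIds.mp hi
  apply sgn_eq
  · refine ⟨{p with id := f p.id}, List.mem_map_of_mem hp, ?_⟩
    show f p.id = f i
    rw [hpi]
  · intro q hq hqi
    rw [relabel, List.mem_map] at hq
    obtain ⟨r, hr, rfl⟩ := hq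
    have hri : r.id = i := hf hqi
    show r.sign = sgn a i
    rw [sgn_valid' ha hr hri]

lemma wt_relabel {f : ℕ → ℕ} (hf : Function.Injective f) {a : KCode} (ha : ValidK a)
    {i : ℕ} (hi : i ∈ crossIds a) : wt (relabel f a) (f i) = wt a i := by
  rw [wt, wt, overPos_relabel hf, underPos_relabel hf, labelAt_relabel,
    labelAt_relabel, sgn_relabel hf ha hi]

lemma validK_relabel {f : ℕ → ℕ} (hf : Function.Injective f) {a : KCode}
    (ha : ValidK a) : ValidK (relabel f a) := by
  intro q hq
  rw [relabel, List.mem_map] at hq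
  obtain ⟨p, hp, rfl⟩ := hq
  obtain ⟨hs, ho, hu, hc⟩ := ha p hp
  refine ⟨hs, ?_, ?_, ?_⟩
  · show ((relabel f a).filter (fun q => q.id == f p.id && q.isOver)).length = 1
    have e : (relabel f a).filter (fun q => q.id == f p.id && q.isOver)
        = (a.filter (fun x => x.id == p.id && x.isOver)).map
            (fun p => { p with id := f p.id }) := by
      rw [relabel, List.filter_map]
      congr 1
      apply List.filter_congr
      intro x _
      show ((f x.id == f p.id) && x.isOver) = _
      rw [beq_f hf]
    rw [e, List.length_map]
    exact ho
  · show ((relabel f a).filter (fun q => q.id == f p.id && !q.isOver)).length = 1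
    have e : (relabel f a).filter (fun q => q.id == f p.id && !q.isOver)
        = (a.filter (fun x => x.id == p.id && !x.isOver)).map
            (fun p => { p with id := f p.id }) := by
      rw [relabel, List.filter_map]
      congr 1
      apply List.filter_congr
      intro x _
      show ((f x.id == f p.id) && !x.isOver) = _
      rw [beq_f hf]
    rw [e, List.length_map]
    exact hu
  · intro q hq hqi
    rw [relabel, List.mem_map] at hq
    obtain ⟨r, hr, rfl⟩ := hq
    have : r.id = p.id := hf hqi
    show r.sign = p.sign
    exact hc r hr this

lemma affP_relabel {f : ℕ → ℕ} (hf : Function.Injective f) {a : KCode} (ha : ValidK a) :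
    affP (relabel f a) = affP a := by
  rw [affP, affP, crossIds_relabel hf, List.map_map]
  apply congrArg
  apply List.map_congr_left
  intro i hi
  show C (sgn (relabel f a) (f i)) * (T (wt (relabel f a) (f i)) - 1) = _
  rw [sgn_relabel hf ha hi, wt_relabel hf ha hi]


/-- The affine index polynomial is additive under connected
sum: if `K # L` denotes a connected sum of virtual knot diagrams `K` and `L`
(obtained by removing an arc from each diagram and joining them — on Gauss
codes, concatenation of codes with disjoint crossing names), then
`P_{K # L}(t) = P_K(t) + P_L(t)`; in particular, for any virtual knot diagram
`K`, `P_{K # K^!}(t) = P_K(t) - P_K(t) = 0`, where `K^!` is the vertical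
mirror image of `K` (taken with freshly renamed crossings). -/
theorem affP_connected_sum (a b : KCode) (ha : ValidK a) (hb : ValidK b)
    (hdisj : ∀ i ∈ crossIds a, i ∉ crossIds b) :
    affP (a ++ b) = affP a + affP b ∧
      ∀ f : ℕ → ℕ, Function.Injective f →
        (∀ i ∈ crossIds a, ∀ j ∈ crossIds a, f i ≠ j) →
        affP (a ++ vmirror (relabel f a)) = 0 := by
  constructor
  · exact affP_append ha hb hdisj
  · intro f hf hff
    have hva' : ValidK (relabel f a) := validK_relabel hf ha
    have hvm : ValidK (vmirror (relabel f a)) := validK_vmirror hva'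
    have hdisj2 : ∀ i ∈ crossIds a, i ∉ crossIds (vmirror (relabel f a)) := by
      intro i hi hmem
      obtain ⟨p, hp, hpi⟩ := mem_crossIds.mp hmem
      obtain ⟨q, hq, rfl⟩ := mem_vmirror.mp hp
      rw [relabel, List.mem_map] at hq
      obtain ⟨r, hr, rfl⟩ := hq
      exact hff r.id (mem_crossIds.mpr ⟨r, hr, rfl⟩) i hi hpi
    rw [affP_append ha hvm hdisj2, affP_vmirror hva', affP_relabel hf ha]
    ring
end

section
/- For a virtual knot diagram K, a classical crossing c is odd (it flanks an odd number of symbols in the Gauss code of K) if and only if its weight W_K(c) is odd; consequently the odd writhe satisfies J(K) = sum over crossings c with W_K(c) odd of sgn(c) = sum over odd n of wr_n(K), where wr_n(K) = sum over crossings c with W_K(c) = n of sgn(c). -/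
/-!
# Virtual knots and links via signed Gauss codes

A virtual knot or link diagram, up to the virtual Reidemeister moves and the
detour move, is faithfully encoded by its signed oriented Gauss code: the
cyclic sequence, along each component, of passages through the classical
crossings, each passage recording the crossing's name, whether the strand
passes over or under, and the crossing sign.  Virtual crossings and the
detour move are invisible in this encoding, so oriented virtual isotopy is
generated by the oriented classical Reidemeister moves together with
re-encoding moves (rotation of the base point, permutation of the components,
renaming of the crossings).
-/

open LaurentPolynomial

private lemma sum_mod_two (l : List ℤ) (h : ∀ x ∈ l, x = 1 ∨ x = -1) :
    l.sum % 2 = (l.length : ℤ) % 2 := by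
  induction l with
  | nil => simp
  | cons x t ih =>
    have hx := h x List.mem_cons_self
    have ht := ih (fun y hy => h y (List.mem_cons_of_mem x hy))
    simp only [List.sum_cons, List.length_cons]
    push_cast
    omega

private lemma labelAt_mod_two (a : KCode) (ha : ValidK a) (k : ℕ) (hk : k ≤ a.length) :
    labelAt a k % 2 = (k : ℤ) % 2 := by
  have h : ∀ x ∈ (a.take k).map Passage.inc, x = 1 ∨ x = -1 := by
    intro x hx
    obtain ⟨p, hp, rfl⟩ := List.mem_map.1 hx
    have hpa : p ∈ a := List.mem_of_mem_take hp
    have hs := (ha p hpa).1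
    unfold Passage.inc
    rcases hs with h | h <;> split <;> omega
  have := sum_mod_two _ h
  rwa [List.length_map, List.length_take, Nat.min_eq_left hk] at this

private lemma exists_pass (a : KCode) (i : ℕ) (hi : i ∈ crossIds a) :
    ∃ p ∈ a, p.id = i := by
  unfold crossIds at hi
  rw [List.mem_dedup, List.mem_map] at hi
  obtain ⟨p, hp, h⟩ := hi
  exact ⟨p, hp, h⟩

private lemma findIdx_lt_of_filter_len (a : KCode) (q : Passage → Bool)
    (h : (a.filter q).length = 1) : a.findIdx q < a.length := by
  have hne : a.filter q ≠ [] := by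
    intro hn; rw [hn] at h; simp at h
  obtain ⟨r, hr⟩ := List.exists_mem_of_ne_nil _ hne
  have := List.mem_filter.1 hr
  exact List.findIdx_lt_length_of_exists ⟨r, this.1, this.2⟩

private lemma overPos_lt (a : KCode) (ha : ValidK a) (i : ℕ) (hi : i ∈ crossIds a) :
    overPos a i < a.length := by
  obtain ⟨p, hp, rfl⟩ := exists_pass a i hi
  exact findIdx_lt_of_filter_len a _ (ha p hp).2.1

private lemma underPos_lt (a : KCode) (ha : ValidK a) (i : ℕ) (hi : i ∈ crossIds a) :
    underPos a i < a.length := by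
  obtain ⟨p, hp, rfl⟩ := exists_pass a i hi
  exact findIdx_lt_of_filter_len a _ (ha p hp).2.2.1

private lemma sgn_pm (a : KCode) (ha : ValidK a) (i : ℕ) (hi : i ∈ crossIds a) :
    sgn a i = 1 ∨ sgn a i = -1 := by
  obtain ⟨p, hp, rfl⟩ := exists_pass a i hi
  have hsome : (a.find? (fun q => q.id == p.id)).isSome := by
    rw [List.find?_isSome]
    exact ⟨p, hp, by simp⟩
  obtain ⟨r, hr⟩ := Option.isSome_iff_exists.1 hsome
  have hrmem := List.mem_of_find?_eq_some hr
  have := (ha r hrmem).1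
  unfold sgn
  rw [hr]
  simpa using this

private lemma sum_grouped (l : List ℕ) (f : ℕ → ℤ) (g : ℕ → ℤ) (S : Finset ℤ)
    (h : ∀ i ∈ l, f i ∈ S) :
    (l.map g).sum = ∑ n ∈ S, ((l.filter (fun i => f i == n)).map g).sum := by
  induction l with
  | nil => simp
  | cons i t ih =>
    have hi := h i List.mem_cons_self
    have ht := ih (fun j hj => h j (List.mem_cons_of_mem i hj))
    have hterm : ∀ n ∈ S,
        (((i :: t).filter (fun j => f j == n)).map g).sum
          = (if f i = n then g i else 0) + ((t.filter (fun j => f j == n)).map g).sum := by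
      intro n _
      by_cases hfn : f i = n <;> simp [List.filter_cons, hfn]
    rw [Finset.sum_congr rfl hterm, Finset.sum_add_distrib, ← ht]
    simp [Finset.sum_ite_eq, hi]

/-- For a virtual knot diagram `K`, a classical crossing `c`
is odd (it flanks an odd number of symbols in the Gauss code of `K`) if and
only if its weight `W_K(c)` is odd; consequently the odd writhe satisfies
`J(K) = ∑_{c : W_K(c) odd} sgn(c) = ∑_{n odd} wr_n(K)`, where
`wr_n(K) = ∑_{c : W_K(c) = n} sgn(c)`. -/
theorem odd_writhe_eq_sum_odd_wrn (a : KCode) (ha : ValidK a) :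
    (∀ i ∈ crossIds a, OddCross a i = true ↔ Odd (wt a i)) ∧
    oddWrithe a
      = (((crossIds a).filter (fun i => decide (Odd (wt a i)))).map (sgn a)).sum ∧
    ∀ S : Finset ℤ, (∀ i ∈ crossIds a, wt a i ∈ S) →
      oddWrithe a = ∑ n ∈ S, if Odd n then wrn a n else 0 := by
  have key : ∀ i ∈ crossIds a, (OddCross a i = true ↔ Odd (wt a i)) := by
    intro i hi
    have hO := overPos_lt a ha i hi
    have hU := underPos_lt a ha i hi
    have h1 := labelAt_mod_two a ha _ hO.le
    have h2 := labelAt_mod_two a ha _ hU.le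
    have hs := sgn_pm a ha i hi
    unfold OddCross wt
    rw [beq_iff_eq, Int.odd_iff]
    omega
  have part2 : oddWrithe a
      = (((crossIds a).filter (fun i => decide (Odd (wt a i)))).map (sgn a)).sum := by
    unfold oddWrithe
    congr 2
    apply List.filter_congr
    intro i hi
    have := key i hi
    cases hc : OddCross a i <;> simp_all
  refine ⟨key, part2, ?_⟩
  intro S hS
  rw [part2]
  rw [sum_grouped _ (wt a) (sgn a) S
    (fun i hi => hS i (List.mem_of_mem_filter hi))]
  apply Finset.sum_congr rfl
  intro n hn
  by_cases hodd : Odd n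
  · simp only [hodd, if_true]
    unfold wrn
    rw [List.filter_filter]
    congr 1
    apply congrArg
    apply List.filter_congr
    intro i hi
    by_cases hw : wt a i = n
    · simp [hw, hodd]
    · simp [hw]
  · simp only [hodd, if_false]
    have : ((crossIds a).filter (fun i => decide (Odd (wt a i)))).filter
        (fun i => wt a i == n) = [] := by
      rw [List.filter_eq_nil_iff]
      intro i hi
      have h1 := List.of_mem_filter hi
      simp only [decide_eq_true_eq] at h1
      simp only [beq_iff_eq]
      intro hw
      exact hodd (hw ▸ h1)
    rw [this]
    simp
end
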